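/- Let 0 ≤ a < b be real numbers and let Δ be a map on signals such that for every signal x in L²[0,∞), the image y := Δx is again a signal in L²[0,∞). Then the following are equivalent: (i) for all τ ∈ ℝ and all signals x in L²[0,∞), |∫₀^∞ (x − b⁻¹y)(t+τ)·(−a·x + y)(t) dt| ≤ ∫₀^∞ (x − b⁻¹y)(t)·(−a·x + y)(t) dt; (ii) for every z ∈ L¹(ℝ) with ‖z‖₁ ≤ 1 (no sign restriction on z), and every signal x in L²[0,∞), one has ⟨x − b⁻¹y, (−a·x + y) − z∗(−a·x + y)⟩ ≥ 0. -/

import Mathlib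

open MeasureTheory Set

/-- A signal in L²[0,∞): square integrable over ℝ and vanishing on (−∞,0). -/
def IsSignal (x : ℝ → ℝ) : Prop :=
  MemLp x 2 volume ∧ ∀ t < (0:ℝ), x t = 0

/-- Convolution (z∗w)(t) = ∫ z(s)·w(t−s) ds. -/
noncomputable def conv (z w : ℝ → ℝ) : ℝ → ℝ := fun t => ∫ s, z s * w (t - s)

open Function Filter
open scoped ENNReal Topology

section Helpers

variable {u v z : ℝ → ℝ}

lemma memℒp_shift_sub (hu : MemLp u 2 (volume : Measure ℝ)) (s : ℝ) :
    MemLp (fun t => u (t - s)) 2 (volume : Measure ℝ) :=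
  hu.comp_measurePreserving (measurePreserving_sub_right volume s)

lemma integrable_mul_L2 (hu : MemLp u 2 (volume : Measure ℝ)) (hv : MemLp v 2 volume) :
    Integrable (fun t => u t * v t) volume := by
  have h := L2.integrable_inner (𝕜 := ℝ) (hu.toLp u) (hv.toLp v)
  refine h.congr ?_
  filter_upwards [hu.coeFn_toLp, hv.coeFn_toLp] with t h1 h2
  simp [h1, h2, RCLike.inner_apply, mul_comm]

lemma integral_mul_eq_inner (hu : MemLp u 2 (volume : Measure ℝ)) (hv : MemLp v 2 volume) :
    ∫ t, u t * v t = (inner ℝ (hu.toLp u) (hv.toLp v) : ℝ) := by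
  rw [L2.inner_def]
  refine integral_congr_ae ?_
  filter_upwards [hu.coeFn_toLp, hv.coeFn_toLp] with t h1 h2
  simp [h1, h2, RCLike.inner_apply, mul_comm]

lemma integral_abs_mul_le (hu : MemLp u 2 (volume : Measure ℝ)) (hv : MemLp v 2 volume) :
    ∫ t, |u t * v t| ≤ (eLpNorm u 2 volume).toReal * (eLpNorm v 2 volume).toReal := by
  have hu' : MemLp (fun t => ‖u t‖) 2 (volume : Measure ℝ) := hu.norm
  have hv' : MemLp (fun t => ‖v t‖) 2 (volume : Measure ℝ) := hv.norm
  have h1 : ∫ t, |u t * v t| = ∫ t, ‖u t‖ * ‖v t‖ := by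
    congr 1; funext t; simp [abs_mul]
  rw [h1, integral_mul_eq_inner hu' hv']
  calc (inner ℝ (hu'.toLp _) (hv'.toLp _) : ℝ)
      ≤ ‖hu'.toLp _‖ * ‖hv'.toLp _‖ := real_inner_le_norm _ _
    _ = (eLpNorm u 2 volume).toReal * (eLpNorm v 2 volume).toReal := by
        rw [Lp.norm_toLp, Lp.norm_toLp, eLpNorm_norm, eLpNorm_norm]

/-- The shifted correlation function `R(s) = ∫ u(t+s) v(t) dt`. -/
noncomputable def Rfn (u v : ℝ → ℝ) : ℝ → ℝ := fun s => ∫ t, u (t + s) * v t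

lemma conv_key (hu : MemLp u 2 (volume : Measure ℝ)) (hv : MemLp v 2 volume)
    (hz : Integrable z volume) :
    Integrable (fun t => u t * conv z v t) volume ∧
    Integrable (fun s => z s * Rfn u v s) volume ∧
    ∫ t, u t * conv z v t = ∫ s, z s * Rfn u v s := by
  set C := (eLpNorm u 2 volume).toReal * (eLpNorm v 2 volume).toReal with hC
  have habs : ∀ s : ℝ, ∫ t, |u t * v (t - s)| ≤ C := by
    intro s
    have h := integral_abs_mul_le hu (memℒp_shift_sub hv s)
    have he : eLpNorm (fun t => v (t - s)) 2 volume = eLpNorm v 2 volume :=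
      eLpNorm_comp_measurePreserving hv.aestronglyMeasurable
        (measurePreserving_sub_right volume s)
    rwa [he] at h
  set H : ℝ × ℝ → ℝ := fun p => u p.1 * (z p.2 * v (p.1 - p.2)) with hH_def
  have hHm : AEStronglyMeasurable H ((volume : Measure ℝ).prod volume) := by
    have h1 := hz.aestronglyMeasurable.convolution_integrand (ContinuousLinearMap.mul ℝ ℝ)
      hv.aestronglyMeasurable
    simp only [ContinuousLinearMap.mul_apply'] at h1
    exact hu.aestronglyMeasurable.comp_fst.mul h1
  have hint_t : ∀ s : ℝ, Integrable (fun t => u t * v (t - s)) volume := fun s =>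
    integrable_mul_L2 hu (memℒp_shift_sub hv s)
  have hH : Integrable H ((volume : Measure ℝ).prod volume) := by
    rw [integrable_prod_iff' hHm]
    constructor
    · refine Filter.Eventually.of_forall fun s => ?_
      have he : (fun t => H (t, s)) = fun t => z s * (u t * v (t - s)) := by
        funext t; simp only [hH_def]; ring
      rw [he]
      exact (hint_t s).const_mul _
    · have hmeas2 : AEStronglyMeasurable (fun s => ∫ t, ‖H (t, s)‖) (volume : Measure ℝ) :=
        hHm.prod_swap.norm.integral_prod_right'
      refine Integrable.mono' (hz.norm.mul_const C) hmeas2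
        (Filter.Eventually.of_forall fun s => ?_)
      have he : ∫ t, ‖H (t, s)‖ = |z s| * ∫ t, |u t * v (t - s)| := by
        rw [← integral_const_mul]
        congr 1; funext t
        simp only [hH_def, Real.norm_eq_abs, abs_mul]
        ring
      rw [Real.norm_of_nonneg (integral_nonneg fun t => norm_nonneg _), he, Real.norm_eq_abs]
      exact mul_le_mul_of_nonneg_left (habs s) (abs_nonneg _)
  have he1 : (fun t => ∫ s, H (t, s)) = fun t => u t * conv z v t := by
    funext t; simp only [hH_def, conv]; rw [integral_const_mul]
  have he2 : (fun s => ∫ t, H (t, s)) = fun s => z s * Rfn u v s := by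
    funext s
    have he : (fun t => H (t, s)) = fun t => z s * (u t * v (t - s)) := by
      funext t; simp only [hH_def]; ring
    rw [he, integral_const_mul]
    congr 1
    rw [Rfn, ← integral_add_right_eq_self (fun t => u t * v (t - s)) s]
    simp
  refine ⟨?_, ?_, ?_⟩
  · rw [← he1]; exact hH.integral_prod_left
  · rw [← he2]; exact hH.integral_prod_right
  · calc ∫ t, u t * conv z v t = ∫ t, ∫ s, H (t, s) := by rw [he1]
      _ = ∫ s, ∫ t, H (t, s) := integral_integral_swap hH
      _ = ∫ s, z s * Rfn u v s := by rw [he2]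

lemma Rfn_continuous (hu : MemLp u 2 (volume : Measure ℝ)) (hv : MemLp v 2 volume) :
    Continuous (Rfn u v) := by
  set g : ℝ → C(ℝ, ℝ) := fun s => ⟨fun t => t + s, by continuity⟩ with hg_def
  have hgc : Continuous g :=
    ContinuousMap.continuous_of_continuous_uncurry g (continuous_snd.add continuous_fst)
  have hgm : ∀ s : ℝ, MeasurePreserving (g s) volume volume := fun s =>
    measurePreserving_add_right volume s
  set U := hu.toLp u with hU
  set V := hv.toLp v with hV
  have hc : Continuous fun s => Lp.compMeasurePreserving (g s) (hgm s) U :=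
    Continuous.compMeasurePreservingLp continuous_const hgc hgm (by norm_num)
  have heq : Rfn u v = fun s => (inner ℝ (Lp.compMeasurePreserving (g s) (hgm s) U) V : ℝ) := by
    funext s
    rw [L2.inner_def]
    have h1 : (Lp.compMeasurePreserving (g s) (hgm s) U : ℝ → ℝ)
        =ᵐ[volume] fun t => u (t + s) :=
      (Lp.coeFn_compMeasurePreserving U (hgm s)).trans
        ((hgm s).quasiMeasurePreserving.ae_eq_comp hu.coeFn_toLp)
    refine integral_congr_ae ?_
    filter_upwards [h1, hv.coeFn_toLp] with t e1 e2
    simp only [RCLike.inner_apply, conj_trivial]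
    rw [e1, e2, mul_comm]
  rw [heq]
  exact Continuous.inner hc continuous_const

lemma dir1 (hu : MemLp u 2 (volume : Measure ℝ)) (hv : MemLp v 2 volume)
    (hR : ∀ τ, |Rfn u v τ| ≤ Rfn u v 0)
    (hz : Integrable z volume) (hz1 : (∫ t, |z t|) ≤ 1) :
    0 ≤ ∫ t, u t * (v t - conv z v t) := by
  have hR0eq : Rfn u v 0 = ∫ t, u t * v t := by simp [Rfn]
  obtain ⟨int1, int2, heq⟩ := conv_key hu hv hz
  have hR0 : 0 ≤ Rfn u v 0 := le_trans (abs_nonneg _) (hR 0)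
  have hsplit : ∫ t, u t * (v t - conv z v t)
      = (∫ t, u t * v t) - ∫ t, u t * conv z v t := by
    rw [← integral_sub (integrable_mul_L2 hu hv) int1]
    congr 1; funext t; ring
  have hle : ∫ s, z s * Rfn u v s ≤ Rfn u v 0 := by
    calc ∫ s, z s * Rfn u v s ≤ ∫ s, |z s| * Rfn u v 0 := by
          refine integral_mono int2 (hz.abs.mul_const _) fun s => ?_
          calc z s * Rfn u v s ≤ |z s * Rfn u v s| := le_abs_self _
            _ = |z s| * |Rfn u v s| := abs_mul _ _
            _ ≤ |z s| * Rfn u v 0 := mul_le_mul_of_nonneg_left (hR s) (abs_nonneg _)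
      _ = (∫ s, |z s|) * Rfn u v 0 := integral_mul_const _ _
      _ ≤ 1 * Rfn u v 0 := mul_le_mul_of_nonneg_right hz1 hR0
      _ = Rfn u v 0 := one_mul _
  rw [hsplit, heq]
  linarith [hR0eq]

lemma dir2 (hu : MemLp u 2 (volume : Measure ℝ)) (hv : MemLp v 2 volume)
    (h : ∀ z : ℝ → ℝ, Integrable z volume → (∫ t, |z t|) ≤ 1 →
      0 ≤ ∫ t, u t * (v t - conv z v t)) (τ : ℝ) :
    |Rfn u v τ| ≤ Rfn u v 0 := by
  have hR0eq : Rfn u v 0 = ∫ t, u t * v t := by simp [Rfn]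
  have key : ∀ z : ℝ → ℝ, Integrable z volume → (∫ t, |z t|) ≤ 1 →
      ∫ s, z s * Rfn u v s ≤ Rfn u v 0 := by
    intro z hz hz1
    obtain ⟨int1, int2, heq⟩ := conv_key hu hv hz
    have h0 := h z hz hz1
    have hsplit : ∫ t, u t * (v t - conv z v t)
        = (∫ t, u t * v t) - ∫ t, u t * conv z v t := by
      rw [← integral_sub (integrable_mul_L2 hu hv) int1]
      congr 1; funext t; ring
    rw [hsplit, heq] at h0
    linarith [hR0eq]
  have hR0 : 0 ≤ Rfn u v 0 := by
    have h0 := key (fun _ => 0) (integrable_zero _ _ _) (by simp)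
    simpa using h0
  have hσ : ∀ σ : ℝ, |σ| = 1 → σ * Rfn u v τ ≤ Rfn u v 0 := by
    intro σ hσ1
    have hRc : Continuous (Rfn u v) := Rfn_continuous hu hv
    have hF : HasDerivAt (fun w => ∫ s in τ..w, Rfn u v s) (Rfn u v τ) τ :=
      intervalIntegral.integral_hasDerivAt_right (hRc.intervalIntegrable _ _)
        (hRc.stronglyMeasurableAtFilter _ _) hRc.continuousAt
    have hslope : Tendsto (fun w => σ * ((w - τ)⁻¹ * ∫ s in τ..w, Rfn u v s))
        (𝓝[>] τ) (𝓝 (σ * Rfn u v τ)) := by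
      have h1 := (hasDerivAt_iff_tendsto_slope.mp hF).mono_left
        (nhdsWithin_mono τ (fun w (hw : w ∈ Ioi τ) => by
          simpa using (ne_of_gt hw : w ≠ τ)))
      have h2 : ∀ w, slope (fun w => ∫ s in τ..w, Rfn u v s) τ w
          = (w - τ)⁻¹ * ∫ s in τ..w, Rfn u v s := by
        intro w
        rw [slope_def_field, intervalIntegral.integral_same, sub_zero, div_eq_inv_mul]
      exact ((h1.congr h2)).const_mul σ
    refine le_of_tendsto hslope ?_
    filter_upwards [self_mem_nhdsWithin] with w hw
    have hwτ : τ < w := hw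
    have hεpos : (0:ℝ) < w - τ := sub_pos.2 hwτ
    set z : ℝ → ℝ := (Ioc τ w).indicator (fun _ => σ * (w - τ)⁻¹) with hz_def
    have hzint : Integrable z volume := by
      rw [hz_def, integrable_indicator_iff measurableSet_Ioc]
      exact integrableOn_const measure_Ioc_lt_top.ne
    have habs : (fun s => |z s|) = (Ioc τ w).indicator (fun _ => (w - τ)⁻¹) := by
      funext s
      by_cases hs : s ∈ Ioc τ w
      · simp [hz_def, hs, abs_mul, hσ1, abs_of_pos (inv_pos.2 hεpos)]
      · simp [hz_def, hs]
    have hz1 : (∫ s, |z s|) ≤ 1 := by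
      rw [habs, integral_indicator measurableSet_Ioc, setIntegral_const, Real.volume_real_Ioc_of_le hwτ.le,
        smul_eq_mul, mul_inv_cancel₀ hεpos.ne']
    have hkey := key z hzint hz1
    have hcomp : ∫ s, z s * Rfn u v s
        = σ * ((w - τ)⁻¹ * ∫ s in τ..w, Rfn u v s) := by
      have e : (fun s => z s * Rfn u v s)
          = (Ioc τ w).indicator (fun s => σ * (w - τ)⁻¹ * Rfn u v s) := by
        funext s
        by_cases hs : s ∈ Ioc τ w
        · simp [hz_def, hs]
        · simp [hz_def, hs]
      rw [e, integral_indicator measurableSet_Ioc, intervalIntegral.integral_of_le hwτ.le,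
        integral_const_mul, mul_assoc]
    rw [← hcomp]
    exact hkey
  have h1 := hσ 1 (by norm_num)
  have h2 := hσ (-1) (by norm_num)
  rw [abs_le]
  constructor <;> linarith

end Helpers

theorem slope_iqc_characterization_odd
    (a b : ℝ) (ha : 0 ≤ a) (hab : a < b)
    (Δ : (ℝ → ℝ) → (ℝ → ℝ))
    (hΔ : ∀ x, IsSignal x → IsSignal (Δ x)) :
    (∀ (τ : ℝ) (x : ℝ → ℝ), IsSignal x →
      |∫ t in Ici (0:ℝ), (x (t + τ) - b⁻¹ * Δ x (t + τ)) * (-a * x t + Δ x t)|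
        ≤ ∫ t in Ici (0:ℝ), (x t - b⁻¹ * Δ x t) * (-a * x t + Δ x t))
    ↔
    (∀ z : ℝ → ℝ, Integrable z → (∫ t, |z t|) ≤ 1 →
      ∀ x : ℝ → ℝ, IsSignal x →
        0 ≤ ∫ t, (x t - b⁻¹ * Δ x t) *
          ((-a * x t + Δ x t) - conv z (fun s => -a * x s + Δ x s) t)) := by
  have setup : ∀ x : ℝ → ℝ, IsSignal x →
      MemLp (fun t => x t - b⁻¹ * Δ x t) 2 (volume : Measure ℝ) ∧
      MemLp (fun s => -a * x s + Δ x s) 2 (volume : Measure ℝ) ∧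
      (∀ t < (0:ℝ), -a * x t + Δ x t = 0) := by
    intro x hx
    obtain ⟨hx2, hx0⟩ := hx
    obtain ⟨hy2, hy0⟩ := hΔ x ⟨hx2, hx0⟩
    refine ⟨hx2.sub (hy2.const_mul _), (hx2.const_mul _).add hy2, fun t ht => ?_⟩
    rw [hx0 t ht, hy0 t ht]; ring
  constructor
  · intro h₁ z hz hz1 x hx
    obtain ⟨hu, hv, hv0⟩ := setup x hx
    have hIci : ∀ τ : ℝ,
        ∫ t in Ici (0:ℝ), (x (t + τ) - b⁻¹ * Δ x (t + τ)) * (-a * x t + Δ x t)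
          = Rfn (fun t => x t - b⁻¹ * Δ x t) (fun s => -a * x s + Δ x s) τ := fun τ =>
      setIntegral_eq_integral_of_forall_compl_eq_zero fun t ht => by
        rw [hv0 t (by simpa using ht), mul_zero]
    have hIci0 : ∫ t in Ici (0:ℝ), (x t - b⁻¹ * Δ x t) * (-a * x t + Δ x t)
        = Rfn (fun t => x t - b⁻¹ * Δ x t) (fun s => -a * x s + Δ x s) 0 := by
      rw [show Rfn (fun t => x t - b⁻¹ * Δ x t) (fun s => -a * x s + Δ x s) 0
          = ∫ t, (x t - b⁻¹ * Δ x t) * (-a * x t + Δ x t) by simp [Rfn]]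
      exact setIntegral_eq_integral_of_forall_compl_eq_zero fun t ht => by
        rw [hv0 t (by simpa using ht), mul_zero]
    have hR : ∀ τ : ℝ,
        |Rfn (fun t => x t - b⁻¹ * Δ x t) (fun s => -a * x s + Δ x s) τ|
          ≤ Rfn (fun t => x t - b⁻¹ * Δ x t) (fun s => -a * x s + Δ x s) 0 := by
      intro τ
      have h := h₁ τ x hx
      rwa [hIci τ, hIci0] at h
    exact dir1 hu hv hR hz hz1
  · intro h₂ τ x hx
    obtain ⟨hu, hv, hv0⟩ := setup x hx
    have hIci : ∀ τ : ℝ,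
        ∫ t in Ici (0:ℝ), (x (t + τ) - b⁻¹ * Δ x (t + τ)) * (-a * x t + Δ x t)
          = Rfn (fun t => x t - b⁻¹ * Δ x t) (fun s => -a * x s + Δ x s) τ := fun τ =>
      setIntegral_eq_integral_of_forall_compl_eq_zero fun t ht => by
        rw [hv0 t (by simpa using ht), mul_zero]
    have hIci0 : ∫ t in Ici (0:ℝ), (x t - b⁻¹ * Δ x t) * (-a * x t + Δ x t)
        = Rfn (fun t => x t - b⁻¹ * Δ x t) (fun s => -a * x s + Δ x s) 0 := by
      rw [show Rfn (fun t => x t - b⁻¹ * Δ x t) (fun s => -a * x s + Δ x s) 0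
          = ∫ t, (x t - b⁻¹ * Δ x t) * (-a * x t + Δ x t) by simp [Rfn]]
      exact setIntegral_eq_integral_of_forall_compl_eq_zero fun t ht => by
        rw [hv0 t (by simpa using ht), mul_zero]
    rw [hIci τ, hIci0]
    exact dir2 hu hv (fun z hz hz1 => h₂ z hz hz1 x hx) τ
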